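/- arXiv:2407.12635 — 5 statements merged into one kernel-verified Lean document; each statement's English description precedes it below -/
import Mathlib

section
/- A square dual quaternion matrix R is unitary if and only if its dual complex adjoint matrix J(R) is unitary. -/
noncomputable section
open Matrix

abbrev Quat := Quaternion ℝ
abbrev DQ := DualNumber Quat
abbrev DC := DualNumber ℂ

/-- Embedding of a complex number as a quaternion (spanned by 1, i). -/
def toQuat (z : ℂ) : Quat := ⟨z.re, z.im, 0, 0⟩
/-- The quaternion unit j. -/
def jq : Quat := ⟨0, 0, 1, 0⟩
/-- First complex component of a quaternion q = c₁ + c₂ j. -/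
def qc1 (q : Quat) : ℂ := ⟨q.re, q.imI⟩
/-- Second complex component of a quaternion q = c₁ + c₂ j. -/
def qc2 (q : Quat) : ℂ := ⟨q.imJ, q.imK⟩
/-- Embedding of a dual complex number as a dual quaternion. -/
def toDQ (z : DC) : DQ := ⟨toQuat z.fst, toQuat z.snd⟩
/-- Conjugate of a dual quaternion: p̂* = p_st* + p_I* ε. -/
def dconj (p : DQ) : DQ := ⟨star p.fst, star p.snd⟩
/-- Conjugate of a dual complex number (complex conjugation of both parts). -/
def dcconj (z : DC) : DC := ⟨(starRingEnd ℂ) z.fst, (starRingEnd ℂ) z.snd⟩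
/-- The dual quaternion c₁ + c₂ j + (c₃ + c₄ j)ε built from four complex numbers. -/
def mkDQ (a b c d : ℂ) : DQ := ⟨toQuat a + toQuat b * jq, toQuat c + toQuat d * jq⟩

/-- The complex adjoint matrix of a quaternion matrix. -/
def adjC {m n : ℕ} (A : Matrix (Fin m) (Fin n) Quat) :
    Matrix (Fin m ⊕ Fin m) (Fin n ⊕ Fin n) ℂ :=
  Matrix.fromBlocks (A.map qc1) (A.map qc2)
    (-(A.map fun q => (starRingEnd ℂ) (qc2 q))) (A.map fun q => (starRingEnd ℂ) (qc1 q))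

/-- The dual complex adjoint matrix J of a dual quaternion matrix. -/
def Jmap {m n : ℕ} (Q : Matrix (Fin m) (Fin n) DQ) :
    Matrix (Fin m ⊕ Fin m) (Fin n ⊕ Fin n) DC :=
  fun i j => ⟨adjC (Q.map TrivSqZeroExt.fst) i j, adjC (Q.map TrivSqZeroExt.snd) i j⟩

/-- Conjugate transpose of a dual quaternion matrix. -/
def dqCT {m n : ℕ} (P : Matrix (Fin m) (Fin n) DQ) : Matrix (Fin n) (Fin m) DQ :=
  fun i j => dconj (P j i)

/-- Conjugate transpose of a dual complex matrix. -/
def dcCT {α β : Type} (P : Matrix α β DC) : Matrix β α DC :=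
  fun i j => dcconj (P j i)

lemma qc1_add (p q : Quat) : qc1 (p+q) = qc1 p + qc1 q := by
  apply Complex.ext <;> simp [qc1]
lemma qc2_add (p q : Quat) : qc2 (p+q) = qc2 p + qc2 q := by
  apply Complex.ext <;> simp [qc2]
lemma qc1_zero : qc1 0 = 0 := by apply Complex.ext <;> simp [qc1, Quaternion.re_zero, Quaternion.imI_zero]
lemma qc2_zero : qc2 0 = 0 := by apply Complex.ext <;> simp [qc2, Quaternion.imJ_zero, Quaternion.imK_zero]
lemma qc1_one : qc1 1 = 1 := by apply Complex.ext <;> simp [qc1, Quaternion.re_one, Quaternion.imI_one]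
lemma qc2_one : qc2 1 = 0 := by apply Complex.ext <;> simp [qc2, Quaternion.imJ_one, Quaternion.imK_one]
lemma qc1_mul (p q : Quat) : qc1 (p*q) = qc1 p * qc1 q - qc2 p * (starRingEnd ℂ) (qc2 q) := by
  apply Complex.ext <;> simp [qc1, qc2, Complex.mul_re, Complex.mul_im] <;> ring
lemma qc2_mul (p q : Quat) : qc2 (p*q) = qc1 p * qc2 q + qc2 p * (starRingEnd ℂ) (qc1 q) := by
  apply Complex.ext <;> simp [qc1, qc2, Complex.mul_re, Complex.mul_im] <;> ring
lemma qc1_star (p : Quat) : qc1 (star p) = (starRingEnd ℂ) (qc1 p) := by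
  apply Complex.ext <;> simp [qc1]
lemma qc2_star (p : Quat) : qc2 (star p) = - qc2 p := by
  apply Complex.ext <;> simp [qc2]
lemma qext (p q : Quat) (h1 : qc1 p = qc1 q) (h2 : qc2 p = qc2 q) : p = q := by
  simp [qc1, qc2, Complex.ext_iff] at h1 h2
  ext <;> tauto

lemma qc1_sum {ι : Type*} (s : Finset ι) (f : ι → Quat) :
    qc1 (∑ i ∈ s, f i) = ∑ i ∈ s, qc1 (f i) := by
  classical
  induction s using Finset.induction with
  | empty => simp [qc1_zero]
  | insert _ _ h ih => simp [Finset.sum_insert h, qc1_add, ih]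
lemma qc2_sum {ι : Type*} (s : Finset ι) (f : ι → Quat) :
    qc2 (∑ i ∈ s, f i) = ∑ i ∈ s, qc2 (f i) := by
  classical
  induction s using Finset.induction with
  | empty => simp [qc2_zero]
  | insert _ _ h ih => simp [Finset.sum_insert h, qc2_add, ih]

lemma adjC_add {m n : ℕ} (A B : Matrix (Fin m) (Fin n) Quat) :
    adjC (A + B) = adjC A + adjC B := by
  ext i j
  cases i <;> cases j <;>
    simp [adjC, qc1_add, qc2_add, map_add] <;> ring

lemma adjC_mul {m n p : ℕ} (A : Matrix (Fin m) (Fin n) Quat) (B : Matrix (Fin n) (Fin p) Quat) :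
    adjC (A * B) = adjC A * adjC B := by
  ext i j
  cases i <;> cases j <;>
    simp only [adjC, Matrix.mul_apply, Matrix.map_apply, Matrix.fromBlocks_apply₁₁,
      Matrix.fromBlocks_apply₁₂, Matrix.fromBlocks_apply₂₁, Matrix.fromBlocks_apply₂₂,
      Matrix.neg_apply, qc1_sum, qc2_sum, qc1_mul, qc2_mul, Fintype.sum_sum_type,
      map_sum, _root_.map_mul, map_add, map_sub, map_neg, Complex.conj_conj, neg_neg,
      Finset.sum_neg_distrib] <;>
    simp only [← Finset.sum_neg_distrib, ← Finset.sum_add_distrib, ← Finset.sum_sub_distrib] <;>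
    exact Finset.sum_congr rfl fun _ _ => by ring

lemma adjC_one {n : ℕ} : adjC (1 : Matrix (Fin n) (Fin n) Quat) = 1 := by
  ext i j
  cases i <;> cases j <;>
    simp [adjC, Matrix.one_apply, apply_ite qc1, apply_ite qc2, qc1_one, qc2_one,
      qc1_zero, qc2_zero, apply_ite (starRingEnd ℂ)]

lemma adjC_ct {m n : ℕ} (A : Matrix (Fin m) (Fin n) Quat) : adjC Aᴴ = (adjC A)ᴴ := by
  ext i j
  cases i <;> cases j <;>
    simp [adjC, Matrix.conjTranspose_apply, qc1_star, qc2_star, map_neg]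

lemma adjC_inj {m n : ℕ} (A B : Matrix (Fin m) (Fin n) Quat) (h : adjC A = adjC B) : A = B := by
  funext i j
  have h1 := congrFun (congrFun h (Sum.inl i)) (Sum.inl j)
  have h2 := congrFun (congrFun h (Sum.inl i)) (Sum.inr j)
  simp [adjC] at h1 h2
  exact qext _ _ h1 h2

lemma map_fst_mul {m n p : ℕ} (P : Matrix (Fin m) (Fin n) DQ) (Q : Matrix (Fin n) (Fin p) DQ) :
    (P * Q).map TrivSqZeroExt.fst = P.map TrivSqZeroExt.fst * Q.map TrivSqZeroExt.fst := by
  funext i j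
  simp [Matrix.mul_apply, TrivSqZeroExt.fst_sum]

lemma map_snd_mul {m n p : ℕ} (P : Matrix (Fin m) (Fin n) DQ) (Q : Matrix (Fin n) (Fin p) DQ) :
    (P * Q).map TrivSqZeroExt.snd =
      P.map TrivSqZeroExt.fst * Q.map TrivSqZeroExt.snd
        + P.map TrivSqZeroExt.snd * Q.map TrivSqZeroExt.fst := by
  funext i j
  simp [Matrix.mul_apply, TrivSqZeroExt.snd_sum, TrivSqZeroExt.snd_mul, ← Finset.sum_add_distrib,
    MulOpposite.smul_eq_mul_unop]

lemma adjC_zero {m n : ℕ} : adjC (0 : Matrix (Fin m) (Fin n) Quat) = 0 := by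
  funext i j
  cases i <;> cases j <;> simp [adjC, qc1_zero, qc2_zero]

lemma map_fst_one {n : ℕ} : (1 : Matrix (Fin n) (Fin n) DQ).map TrivSqZeroExt.fst = 1 := by
  funext i j
  simp [Matrix.one_apply, apply_ite TrivSqZeroExt.fst]

lemma map_snd_one {n : ℕ} : (1 : Matrix (Fin n) (Fin n) DQ).map TrivSqZeroExt.snd = 0 := by
  funext i j
  simp [Matrix.one_apply, apply_ite TrivSqZeroExt.snd]

lemma Jmap_one {n : ℕ} : Jmap (1 : Matrix (Fin n) (Fin n) DQ) = 1 := by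
  funext i j
  apply TrivSqZeroExt.ext
  · show adjC _ i j = ((1 : Matrix _ _ DC) i j).fst
    rw [map_fst_one, adjC_one]
    simp [Matrix.one_apply, apply_ite TrivSqZeroExt.fst]
  · show adjC _ i j = ((1 : Matrix _ _ DC) i j).snd
    rw [map_snd_one, adjC_zero]
    simp [Matrix.one_apply, apply_ite TrivSqZeroExt.snd]

lemma Jmap_mul {m n p : ℕ} (P : Matrix (Fin m) (Fin n) DQ) (Q : Matrix (Fin n) (Fin p) DQ) :
    Jmap (P * Q) = Jmap P * Jmap Q := by
  funext i j
  apply TrivSqZeroExt.ext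
  · show adjC _ i j = ((Jmap P * Jmap Q) i j).fst
    rw [map_fst_mul, adjC_mul]
    simp [Matrix.mul_apply, TrivSqZeroExt.fst_sum, Jmap]
    rfl
  · show adjC _ i j = ((Jmap P * Jmap Q) i j).snd
    rw [map_snd_mul, adjC_add, adjC_mul, adjC_mul]
    simp only [Matrix.mul_apply, Matrix.add_apply, TrivSqZeroExt.snd_sum,
      TrivSqZeroExt.snd_mul, Jmap, smul_eq_mul, MulOpposite.smul_eq_mul_unop,
      MulOpposite.unop_op, ← Finset.sum_add_distrib]
    exact Finset.sum_congr rfl fun _ _ => rfl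

lemma Jmap_inj {m n : ℕ} (P Q : Matrix (Fin m) (Fin n) DQ) (h : Jmap P = Jmap Q) : P = Q := by
  have hf : adjC (P.map TrivSqZeroExt.fst) = adjC (Q.map TrivSqZeroExt.fst) := by
    funext i j
    exact congrArg TrivSqZeroExt.fst (congrFun (congrFun h i) j)
  have hs : adjC (P.map TrivSqZeroExt.snd) = adjC (Q.map TrivSqZeroExt.snd) := by
    funext i j
    exact congrArg TrivSqZeroExt.snd (congrFun (congrFun h i) j)
  have hf' := adjC_inj _ _ hf
  have hs' := adjC_inj _ _ hs
  funext i j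
  exact TrivSqZeroExt.ext (congrFun (congrFun hf' i) j) (congrFun (congrFun hs' i) j)

lemma Jmap_dqCT {m n : ℕ} (P : Matrix (Fin m) (Fin n) DQ) :
    Jmap (dqCT P) = dcCT (Jmap P) := by
  have hf : (dqCT P).map TrivSqZeroExt.fst = (P.map TrivSqZeroExt.fst)ᴴ := by
    funext i j; simp [dqCT, dconj, Matrix.conjTranspose_apply]
  have hs : (dqCT P).map TrivSqZeroExt.snd = (P.map TrivSqZeroExt.snd)ᴴ := by
    funext i j; simp [dqCT, dconj, Matrix.conjTranspose_apply]
  funext i j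
  apply TrivSqZeroExt.ext
  · show adjC _ i j = _
    rw [hf, adjC_ct]
    rfl
  · show adjC _ i j = _
    rw [hs, adjC_ct]
    rfl

theorem stmt5 {n : ℕ} (R : Matrix (Fin n) (Fin n) DQ) :
    (dqCT R * R = 1 ∧ R * dqCT R = 1) ↔
      (dcCT (Jmap R) * Jmap R = 1 ∧ Jmap R * dcCT (Jmap R) = 1) := by
  constructor
  · rintro ⟨h1, h2⟩
    constructor
    · rw [← Jmap_dqCT, ← Jmap_mul, h1, Jmap_one]
    · rw [← Jmap_dqCT, ← Jmap_mul, h2, Jmap_one]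
  · rintro ⟨h1, h2⟩
    constructor
    · apply Jmap_inj
      rw [Jmap_mul, Jmap_dqCT, Jmap_one]
      exact h1
    · apply Jmap_inj
      rw [Jmap_mul, Jmap_dqCT, Jmap_one]
      exact h2
end
end

section
/- For any dual quaternion â, there exist a unit dual quaternion q̂ and a dual complex number λ̂ such that q̂* â q̂ = λ̂. (Every dual quaternion is similar via a unit dual quaternion to a dual complex number.) -/
noncomputable section
open Matrix

open scoped Quaternion

/-- A quaternion from its four real components, typed as `Quat`. -/
def qmk (a b c d : ℝ) : Quat := ⟨a, b, c, d⟩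
@[simp] theorem qmk_re (a b c d : ℝ) : (qmk a b c d).re = a := rfl
@[simp] theorem qmk_imI (a b c d : ℝ) : (qmk a b c d).imI = b := rfl
@[simp] theorem qmk_imJ (a b c d : ℝ) : (qmk a b c d).imJ = c := rfl
@[simp] theorem qmk_imK (a b c d : ℝ) : (qmk a b c d).imK = d := rfl
/-- A dual quaternion from its two parts, typed as `DQ`. -/
def dqmk (x y : Quat) : DQ := ⟨x, y⟩
@[simp] theorem dqmk_fst (x y : Quat) : (dqmk x y).fst = x := rfl
@[simp] theorem dqmk_snd (x y : Quat) : (dqmk x y).snd = y := rfl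
/-- A dual complex number from its two parts, typed as `DC`. -/
def dcmk (x y : ℂ) : DC := ⟨x, y⟩
@[simp] theorem dcmk_fst (x y : ℂ) : (dcmk x y).fst = x := rfl
@[simp] theorem dcmk_snd (x y : ℂ) : (dcmk x y).snd = y := rfl
@[simp] theorem dconj_fst (p : DQ) : (dconj p).fst = star p.fst := rfl
@[simp] theorem dconj_snd (p : DQ) : (dconj p).snd = star p.snd := rfl
@[simp] theorem toDQ_fst (z : DC) : (toDQ z).fst = toQuat z.fst := rfl
@[simp] theorem toDQ_snd (z : DC) : (toDQ z).snd = toQuat z.snd := rfl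

theorem keyA' (t x y z s : ℝ) (hs : x^2+y^2+z^2 = s^2) :
    star (⟨0, x+s, y, z⟩ : Quat) * ⟨t,x,y,z⟩ * ⟨0,x+s,y,z⟩
      = (2*s*(s+x)) • (⟨t,s,0,0⟩ : Quat) := by
  ext <;> simp [Quaternion.re_mul, Quaternion.imI_mul, Quaternion.imJ_mul, Quaternion.imK_mul]
  · linear_combination t*hs
  · linear_combination (x+2*s)*hs
  · linear_combination y*hs
  · linear_combination z*hs

theorem keyU' (x y z s : ℝ) (hs : x^2+y^2+z^2 = s^2) :
    star (⟨0, x+s, y, z⟩ : Quat) * ⟨0,x+s,y,z⟩ = ((2*s*(s+x) : ℝ) : Quat) := by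
  ext <;> simp [Quaternion.re_mul, Quaternion.imI_mul, Quaternion.imJ_mul, Quaternion.imK_mul]
  all_goals first | ring1 | linear_combination hs

theorem scaleconj' (c : ℝ) (u A : Quat) :
    star (c • u) * A * (c • u) = (c^2) • (star u * A * u) := by
  rw [Quaternion.star_smul, smul_mul_assoc, smul_mul_assoc, mul_smul_comm, smul_smul, sq]

theorem scaleconj2' (c : ℝ) (u : Quat) :
    star (c • u) * (c • u) = (c^2) • (star u * u) := by
  rw [Quaternion.star_smul, smul_mul_assoc, mul_smul_comm, smul_smul, sq]

/-- Every quaternion is conjugate, via a unit quaternion, to a complex number. -/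
theorem L1' (A : Quat) : ∃ u : Quat, star u * u = 1 ∧
    star u * A * u = ⟨A.re, Real.sqrt (A.imI^2 + A.imJ^2 + A.imK^2), 0, 0⟩ := by
  obtain ⟨t, x, y, z, rfl⟩ : ∃ t x y z : ℝ, A = qmk t x y z := ⟨A.re, A.imI, A.imJ, A.imK, rfl⟩
  simp only [qmk_re, qmk_imI, qmk_imJ, qmk_imK]
  set s := Real.sqrt (x^2+y^2+z^2) with hsdef
  have hs : x^2+y^2+z^2 = s^2 := (Real.sq_sqrt (by positivity)).symm
  have hs0 : 0 ≤ s := Real.sqrt_nonneg _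
  rcases eq_or_lt_of_le hs0 with h0 | hpos
  · have hx : x = 0 ∧ y = 0 ∧ z = 0 := by
      have h := hs; rw [← h0] at h
      refine ⟨by nlinarith, by nlinarith, by nlinarith⟩
    obtain ⟨hx, hy, hz⟩ := hx
    refine ⟨1, by simp, ?_⟩
    ext <;> simp [hx, hy, hz, ← h0, Quaternion.re_mul, Quaternion.imI_mul, Quaternion.imJ_mul, Quaternion.imK_mul]
  · rcases eq_or_ne x (-s) with hx | hx
    · have hy : y = 0 := by nlinarith
      have hz : z = 0 := by nlinarith
      refine ⟨qmk 0 0 1 0, ?_, ?_⟩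
      · ext <;> simp [Quaternion.re_mul, Quaternion.imI_mul, Quaternion.imJ_mul, Quaternion.imK_mul]
      · ext <;> simp [Quaternion.re_mul, Quaternion.imI_mul, Quaternion.imJ_mul, Quaternion.imK_mul,
          hx, hy, hz]
    · have hsx : 0 < 2*s*(s+x) := by
        have hxs : -s < x := by
          rcases lt_or_ge (-s) x with h | h
          · exact h
          · exfalso
            have hy : y = 0 := by nlinarith
            have hz : z = 0 := by nlinarith
            apply hx; nlinarith
        nlinarith
      set d := Real.sqrt (2*s*(s+x)) with hd
      have hd2 : d^2 = 2*s*(s+x) := Real.sq_sqrt hsx.le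
      refine ⟨d⁻¹ • qmk 0 (x+s) y z, ?_, ?_⟩
      · rw [scaleconj2', show star (qmk 0 (x+s) y z) * qmk 0 (x+s) y z = ((2*s*(s+x) : ℝ) : Quat)
            from keyU' x y z s hs, ← Quaternion.coe_smul, smul_eq_mul, inv_pow, hd2,
          inv_mul_cancel₀ hsx.ne', Quaternion.coe_one]
      · rw [scaleconj', show star (qmk 0 (x+s) y z) * qmk t x y z * qmk 0 (x+s) y z
            = (2*s*(s+x)) • qmk t s 0 0 from keyA' t x y z s hs, smul_smul, inv_pow, hd2,
          inv_mul_cancel₀ hsx.ne', one_smul]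
        rfl

theorem creal' (r : ℝ) (u : Quat) :
    star u * (r : Quat) * u = r • (star u * u) := by
  rw [show (r : Quat) = r • (1 : Quat) by ext <;> simp, mul_smul_comm, mul_one, smul_mul_assoc]

theorem keyW2' (t s br bi bj bk : ℝ) (hs : s ≠ 0) :
    (⟨t,s,0,0⟩ : Quat) * ⟨0,0,-(bk/(2*s)), bj/(2*s)⟩ +
      ((⟨br,bi,bj,bk⟩ : Quat) + star (⟨0,0,-(bk/(2*s)), bj/(2*s)⟩ : Quat) * ⟨t,s,0,0⟩)
      = ⟨br,bi,0,0⟩ := by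
  ext <;> simp [Quaternion.re_mul, Quaternion.imI_mul, Quaternion.imJ_mul, Quaternion.imK_mul] <;>
    field_simp <;> ring

theorem stmt8 (a : DQ) :
    ∃ q : DQ, ∃ l : DC, dconj q * q = 1 ∧ dconj q * a * q = toDQ l := by
  set A := a.fst with hAdef
  set B := a.snd with hBdef
  have ha : a = (⟨A, B⟩ : DQ) := rfl
  by_cases hA : A.imI = 0 ∧ A.imJ = 0 ∧ A.imK = 0
  · -- standard part is real
    obtain ⟨u, hu, hB⟩ := L1' B
    have hAr : A = ((A.re : ℝ) : Quat) := by
      ext <;> simp [hA.1, hA.2.1, hA.2.2]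
    refine ⟨dqmk u 0, dcmk ⟨A.re, 0⟩ ⟨B.re, Real.sqrt (B.imI^2 + B.imJ^2 + B.imK^2)⟩, ?_, ?_⟩
    · refine TrivSqZeroExt.ext ?_ ?_
      · simpa using hu
      · simp [TrivSqZeroExt.snd_mul]
    · refine TrivSqZeroExt.ext ?_ ?_
      · simp
        rw [← hAdef, hAr, creal', hu]
        ext <;> simp [toQuat]
      · simp [TrivSqZeroExt.snd_mul]
        rw [← hBdef, hB]
        ext <;> simp [toQuat]
  · -- standard part has nonzero imaginary part
    obtain ⟨u, hu, hA'⟩ := L1' A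
    set s := Real.sqrt (A.imI^2 + A.imJ^2 + A.imK^2) with hsdef
    have hspos : 0 < s := by
      apply Real.sqrt_pos.2
      rcases not_and_or.1 hA with h | h
      · have : A.imI ≠ 0 := h
        positivity
      rcases not_and_or.1 h with h | h
      · have : A.imJ ≠ 0 := h
        positivity
      · have : A.imK ≠ 0 := h
        positivity
    set B' := star u * B * u with hB'def
    set w : Quat := qmk 0 0 (-(B'.imK/(2*s))) (B'.imJ/(2*s)) with hwdef
    refine ⟨dqmk u (u * w), dcmk ⟨A.re, s⟩ ⟨B'.re, B'.imI⟩, ?_, ?_⟩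
    · refine TrivSqZeroExt.ext ?_ ?_
      · simpa using hu
      · simp [TrivSqZeroExt.snd_mul]
        rw [← mul_assoc, hu, one_mul, mul_assoc, hu, mul_one]
        ext <;> simp [hwdef]
    · refine TrivSqZeroExt.ext ?_ ?_
      · simp
        rw [← hAdef, hA']
        rfl
      · simp [TrivSqZeroExt.snd_mul]
        rw [← hAdef, ← hBdef, ← mul_assoc (star u * A) u w,
          mul_assoc (star w) (star u) A, mul_assoc (star w) (star u * A) u, hA', ← hB'def]
        exact keyW2' A.re s B'.re B'.imI B'.imJ B'.imK hspos.ne'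
end
end

section
/- Let â = a1 + a2 ε, b̂ = b1 + b2 ε be dual complex numbers with a1 ∉ ℝ and b1 ∉ ℝ, and suppose some unit dual quaternion satisfies âq̂ = q̂b̂. Then either â = b̂ and the set of unit dual quaternions q̂ with âq̂ = q̂b̂ equals the set of unit dual complex numbers, or â = b̂̄ (componentwise complex conjugate) and that set equals { q̂ j : q̂ a unit dual complex number }. -/
noncomputable section
open Matrix

open scoped ComplexConjugate
open Quaternion

lemma mk_eq (c d : ℂ) : toQuat c + toQuat d * jq = ⟨c.re, c.im, d.re, d.im⟩ := by
  ext <;> simp [Quaternion.re_mul, Quaternion.imI_mul, Quaternion.imJ_mul, Quaternion.imK_mul] <;> simp [toQuat, jq]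
lemma decomp (q : Quat) : q = toQuat (qc1 q) + toQuat (qc2 q) * jq := by rw [mk_eq]; rfl
lemma pair_inj {c d c' d' : ℂ} :
    toQuat c + toQuat d * jq = toQuat c' + toQuat d' * jq ↔ c = c' ∧ d = d' := by
  rw [mk_eq, mk_eq]; erw [QuaternionAlgebra.mk.injEq]; simp [Quaternion.ext_iff, Complex.ext_iff]; tauto
lemma mul_pair (c d c' d' : ℂ) :
    (toQuat c + toQuat d * jq) * (toQuat c' + toQuat d' * jq) =
      toQuat (c*c' - d*conj d') + toQuat (c*d' + d*conj c') * jq := by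
  rw [mk_eq, mk_eq, mk_eq]; ext <;> erw [QuaternionAlgebra.mk_mul_mk] <;> simp <;> ring
lemma star_pair (c d : ℂ) :
    star (toQuat c + toQuat d * jq) = toQuat (conj c) + toQuat (-d) * jq := by
  rw [mk_eq, mk_eq]; ext <;> erw [QuaternionAlgebra.star_mk] <;> simp
lemma one_pair : (1 : Quat) = toQuat 1 + toQuat 0 * jq := by rw [mk_eq]; ext <;> simp
lemma zero_pair : (0 : Quat) = toQuat 0 + toQuat 0 * jq := by rw [mk_eq]; ext <;> simp

lemma dq_eq_iff (p q : DQ) : p = q ↔ p.fst = q.fst ∧ p.snd = q.snd :=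
  ⟨fun h => ⟨congrArg _ h, congrArg _ h⟩, fun ⟨h1, h2⟩ => TrivSqZeroExt.ext h1 h2⟩
lemma dc_eq_iff (p q : DC) : p = q ↔ p.fst = q.fst ∧ p.snd = q.snd :=
  ⟨fun h => ⟨congrArg _ h, congrArg _ h⟩, fun ⟨h1, h2⟩ => TrivSqZeroExt.ext h1 h2⟩

lemma dq_fst_mul (p q : DQ) : (p * q).fst = p.fst * q.fst := rfl
lemma dq_snd_mul (p q : DQ) : (p * q).snd = p.fst * q.snd + p.snd * q.fst := by
  simp [TrivSqZeroExt.snd_mul]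
lemma dc_fst_mul (p q : DC) : (p * q).fst = p.fst * q.fst := rfl
lemma dc_snd_mul (p q : DC) : (p * q).snd = p.fst * q.snd + p.snd * q.fst := by
  simp [TrivSqZeroExt.snd_mul]

lemma translDQ (a b : DC) (q : DQ) :
    (dconj q * q = 1 ∧ toDQ a * q = q * toDQ b) ↔
      (conj (qc1 q.fst) * qc1 q.fst + qc2 q.fst * conj (qc2 q.fst) = 1
       ∧ conj (qc1 q.fst) * qc1 q.snd + qc2 q.fst * conj (qc2 q.snd)
           + conj (qc1 q.snd) * qc1 q.fst + qc2 q.snd * conj (qc2 q.fst) = 0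
       ∧ a.fst * qc1 q.fst = qc1 q.fst * b.fst
       ∧ a.fst * qc2 q.fst = qc2 q.fst * conj b.fst
       ∧ a.fst * qc1 q.snd + a.snd * qc1 q.fst = qc1 q.fst * b.snd + qc1 q.snd * b.fst
       ∧ a.fst * qc2 q.snd + a.snd * qc2 q.fst
           = qc2 q.fst * conj b.snd + qc2 q.snd * conj b.fst) := by
  set c1 := qc1 q.fst; set c2 := qc2 q.fst; set d1 := qc1 q.snd; set d2 := qc2 q.snd
  have hf : q.fst = toQuat c1 + toQuat c2 * jq := decomp _
  have hs : q.snd = toQuat d1 + toQuat d2 * jq := decomp _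
  rw [dq_eq_iff, dq_eq_iff, dq_fst_mul, dq_snd_mul, dq_fst_mul, dq_snd_mul, dq_fst_mul,
    dq_snd_mul]
  show ((star q.fst * q.fst = (1:DQ).fst ∧ star q.fst * q.snd + star q.snd * q.fst = (1:DQ).snd)
      ∧ _) ↔ _
  have h1 : (1:DQ).fst = 1 := rfl
  have h0 : (1:DQ).snd = 0 := rfl
  rw [h1, h0]
  show _ ∧ (toQuat a.fst * q.fst = q.fst * toQuat b.fst ∧
      toQuat a.fst * q.snd + toQuat a.snd * q.fst
        = q.fst * toQuat b.snd + q.snd * toQuat b.fst) ↔ _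
  rw [hf, hs]
  have e0 (x : ℂ) : toQuat x = toQuat x + toQuat 0 * jq := by
    rw [mk_eq]; ext <;> simp [toQuat]
  rw [star_pair, star_pair, mul_pair, mul_pair, mul_pair, e0 a.fst, e0 b.fst, e0 a.snd,
    e0 b.snd, mul_pair, mul_pair, mul_pair, mul_pair, mul_pair, mul_pair]
  have add_pair (x y x' y' : ℂ) : (toQuat x + toQuat y * jq) + (toQuat x' + toQuat y' * jq)
      = toQuat (x + x') + toQuat (y + y') * jq := by
    rw [mk_eq, mk_eq, mk_eq]; ext <;> simp <;> rfl
  rw [add_pair, add_pair, add_pair, one_pair, zero_pair, pair_inj, pair_inj, pair_inj, pair_inj]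
  simp only [map_zero, mul_zero, zero_mul, add_zero, zero_add, sub_zero, neg_mul, neg_neg]
  constructor
  · rintro ⟨⟨⟨u1, -⟩, ⟨u2, -⟩⟩, ⟨⟨v1, v2⟩, ⟨v3, v4⟩⟩⟩
    refine ⟨by linear_combination u1, by linear_combination u2, by linear_combination v1,
      by linear_combination v2, by linear_combination v3, by linear_combination v4⟩
  · rintro ⟨u1, u2, v1, v2, v3, v4⟩
    exact ⟨⟨⟨by linear_combination u1, by ring⟩, ⟨by linear_combination u2, by ring⟩⟩,
      ⟨⟨by linear_combination v1, by linear_combination v2⟩,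
       ⟨by linear_combination v3, by linear_combination v4⟩⟩⟩

lemma core {a1 a2 b1 b2 c1 c2 d1 d2 : ℂ} (hb : b1.im ≠ 0)
    (hu : conj c1 * c1 + c2 * conj c2 = 1)
    (h1 : a1*c1 = c1*b1) (h2 : a1*c2 = c2*conj b1)
    (h3 : a1*d1 + a2*c1 = c1*b2 + d1*b1)
    (h4 : a1*d2 + a2*c2 = c2*conj b2 + d2*conj b1) :
    (a1 = b1 ∧ a2 = b2 ∧ c2 = 0 ∧ d2 = 0) ∨
      (a1 = conj b1 ∧ a2 = conj b2 ∧ c1 = 0 ∧ d1 = 0) := by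
  have hbb : conj b1 ≠ b1 := by
    intro h; exact hb (Complex.conj_eq_iff_im.mp h)
  by_cases hc1 : c1 = 0
  · right
    have hc2 : c2 ≠ 0 := by
      intro h; rw [hc1, h] at hu; simp at hu
    have e1 : a1 = conj b1 := by
      have := mul_right_cancel₀ hc2 (show a1 * c2 = conj b1 * c2 by linear_combination h2)
      exact this
    have hne : a1 - b1 ≠ 0 := by
      intro h
      exact hbb (by linear_combination h - e1)
    have hd1 : d1 = 0 := by
      have : (a1 - b1) * d1 = 0 := by rw [hc1] at h3; linear_combination h3
      rcases mul_eq_zero.mp this with h | h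
      · exact absurd h hne
      · exact h
    have e2 : a2 = conj b2 := by
      have : a2 * c2 = conj b2 * c2 := by rw [e1] at h4; linear_combination h4
      exact mul_right_cancel₀ hc2 this
    exact ⟨e1, e2, hc1, hd1⟩
  · left
    have e1 : a1 = b1 := by
      have : a1 * c1 = b1 * c1 := by linear_combination h1
      exact mul_right_cancel₀ hc1 this
    have hne : a1 - conj b1 ≠ 0 := by
      intro h
      exact hbb (by linear_combination e1 - h)
    have hc2 : c2 = 0 := by
      have : (a1 - conj b1) * c2 = 0 := by linear_combination h2
      rcases mul_eq_zero.mp this with h | h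
      · exact absurd h hne
      · exact h
    have hd2 : d2 = 0 := by
      have : (a1 - conj b1) * d2 = 0 := by rw [hc2] at h4; linear_combination h4
      rcases mul_eq_zero.mp this with h | h
      · exact absurd h hne
      · exact h
    have e2 : a2 = b2 := by
      have : a2 * c1 = b2 * c1 := by rw [e1] at h3; linear_combination h3
      exact mul_right_cancel₀ hc1 this
    exact ⟨e1, e2, hc2, hd2⟩

lemma qc1_toQuat (w : ℂ) : qc1 (toQuat w) = w := rfl
lemma qc2_toQuat (w : ℂ) : qc2 (toQuat w) = 0 := rfl
lemma toQuat_zero : toQuat 0 = 0 := by ext <;> simp [toQuat]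
lemma qc1_toQuat_j (w : ℂ) : qc1 (toQuat w * jq) = 0 := by
  simp [qc1, Quaternion.re_mul, Quaternion.imI_mul, Quaternion.imJ_mul, Quaternion.imK_mul, Complex.ext_iff]
  simp [toQuat, jq]
lemma qc2_toQuat_j (w : ℂ) : qc2 (toQuat w * jq) = w := by
  simp [qc2, Quaternion.re_mul, Quaternion.imI_mul, Quaternion.imJ_mul, Quaternion.imK_mul, Complex.ext_iff]
  simp [toQuat, jq]

lemma dc_unit_iff (z : DC) :
    dcconj z * z = 1 ↔
      (conj z.fst * z.fst = 1 ∧ conj z.fst * z.snd + conj z.snd * z.fst = 0) := by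
  rw [dc_eq_iff, dc_fst_mul, dc_snd_mul]
  have h1 : (1:DC).fst = 1 := rfl
  have h0 : (1:DC).snd = 0 := rfl
  rw [h1, h0]
  exact Iff.rfl

lemma conj_swap {x y : ℂ} (h : conj x * y + conj y * x = 0) :
    x * conj y + y * conj x = 0 := by
  have := congrArg (starRingEnd ℂ) h
  simpa [mul_comm] using this

lemma mulJ_fst (z : DC) : TrivSqZeroExt.fst (toDQ z * ⟨jq, 0⟩ : DQ) = toQuat z.fst * jq :=
  rfl
lemma mulJ_snd (z : DC) : TrivSqZeroExt.snd (toDQ z * ⟨jq, 0⟩ : DQ) = toQuat z.snd * jq := by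
  erw [dq_snd_mul]
  show toQuat z.fst * 0 + toQuat z.snd * jq = _
  rw [mul_zero, zero_add]

lemma conj_swap' {x y : ℂ} (h : x * conj y + y * conj x = 0) :
    conj x * y + conj y * x = 0 := by
  have := congrArg (starRingEnd ℂ) h
  simpa [mul_comm] using this

theorem stmt10 (a b : DC) (ha : (a.fst).im ≠ 0) (hb : (b.fst).im ≠ 0)
    (h : ∃ q : DQ, dconj q * q = 1 ∧ toDQ a * q = q * toDQ b) :
    (a = b ∧
      {q : DQ | dconj q * q = 1 ∧ toDQ a * q = q * toDQ b} =
        {q : DQ | ∃ z : DC, dcconj z * z = 1 ∧ q = toDQ z}) ∨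
    (a = dcconj b ∧
      {q : DQ | dconj q * q = 1 ∧ toDQ a * q = q * toDQ b} =
        {q : DQ | ∃ z : DC, dcconj z * z = 1 ∧ q = toDQ z * ⟨jq, 0⟩}) := by
  have hbb : conj b.fst ≠ b.fst := by
    intro hh; exact hb (Complex.conj_eq_iff_im.mp hh)
  obtain ⟨q, hq⟩ := h
  obtain ⟨u1, u2, v1, v2, v3, v4⟩ := (translDQ a b q).mp hq
  rcases core hb u1 v1 v2 v3 v4 with ⟨e1, e2, -, -⟩ | ⟨e1, e2, -, -⟩
  · -- case a = b
    left
    refine ⟨TrivSqZeroExt.ext e1 e2, ?_⟩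
    ext q'
    simp only [Set.mem_setOf_eq]
    rw [translDQ]
    constructor
    · rintro ⟨u1', u2', v1', v2', v3', v4'⟩
      set c1' := qc1 q'.fst with hc1e
      set c2' := qc2 q'.fst with hc2e
      set d1' := qc1 q'.snd with hd1e
      set d2' := qc2 q'.snd with hd2e
      have hf' : q'.fst = toQuat c1' + toQuat c2' * jq := decomp _
      have hs' : q'.snd = toQuat d1' + toQuat d2' * jq := decomp _
      rcases core hb u1' v1' v2' v3' v4' with ⟨-, -, hc2, hd2⟩ | ⟨f1, -, -, -⟩
      · refine ⟨⟨c1', d1'⟩, ?_, ?_⟩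
        · erw [dc_unit_iff]
          show conj c1' * c1' = 1 ∧ conj c1' * d1' + conj d1' * c1' = 0
          constructor
          · rw [hc2] at u1'; linear_combination u1'
          · rw [hc2, hd2] at u2'; linear_combination u2'
        · rw [dq_eq_iff]
          refine ⟨?_, ?_⟩
          · show q'.fst = toQuat c1'
            rw [hf', hc2, toQuat_zero, zero_mul, add_zero]
          · show q'.snd = toQuat d1'
            rw [hs', hd2, toQuat_zero, zero_mul, add_zero]
      · exact absurd (e1.symm.trans f1) hbb.symm
    · rintro ⟨z, hz, rfl⟩
      obtain ⟨hz1, hz2⟩ := (dc_unit_iff z).mp hz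
      have f1 : (toDQ z).fst = toQuat z.fst := rfl
      have f2 : (toDQ z).snd = toQuat z.snd := rfl
      rw [f1, f2, qc1_toQuat, qc1_toQuat, qc2_toQuat, qc2_toQuat]
      refine ⟨?_, ?_, ?_, ?_, ?_, ?_⟩
      · simp only [map_zero, mul_zero, add_zero]; linear_combination hz1
      · simp only [map_zero, mul_zero, add_zero]; linear_combination hz2
      · rw [e1]; ring
      · simp
      · rw [e1, e2]; ring
      · simp
  · -- case a = dcconj b
    right
    refine ⟨TrivSqZeroExt.ext e1 e2, ?_⟩
    ext q'
    simp only [Set.mem_setOf_eq]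
    rw [translDQ]
    constructor
    · rintro ⟨u1', u2', v1', v2', v3', v4'⟩
      set c1' := qc1 q'.fst with hc1e
      set c2' := qc2 q'.fst with hc2e
      set d1' := qc1 q'.snd with hd1e
      set d2' := qc2 q'.snd with hd2e
      have hf' : q'.fst = toQuat c1' + toQuat c2' * jq := decomp _
      have hs' : q'.snd = toQuat d1' + toQuat d2' * jq := decomp _
      rcases core hb u1' v1' v2' v3' v4' with ⟨f1, -, -, -⟩ | ⟨-, -, hc1, hd1⟩
      · exact absurd (e1.symm.trans f1).symm hbb.symm
      · refine ⟨⟨c2', d2'⟩, ?_, ?_⟩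
        · erw [dc_unit_iff]
          show conj c2' * c2' = 1 ∧ conj c2' * d2' + conj d2' * c2' = 0
          constructor
          · rw [hc1] at u1'; simp only [map_zero, mul_zero, zero_mul, zero_add] at u1'
            linear_combination u1'
          · rw [hc1, hd1] at u2'
            simp only [map_zero, mul_zero, zero_mul, zero_add, add_zero] at u2'
            exact conj_swap' u2'
        · erw [dq_eq_iff, mulJ_fst, mulJ_snd]
          refine ⟨?_, ?_⟩
          · show q'.fst = toQuat c2' * jq
            rw [hf', hc1, toQuat_zero, zero_add]
          · show q'.snd = toQuat d2' * jq
            rw [hs', hd1, toQuat_zero, zero_add]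
    · rintro ⟨z, hz, rfl⟩
      obtain ⟨hz1, hz2⟩ := (dc_unit_iff z).mp hz
      rw [mulJ_fst, mulJ_snd, qc1_toQuat_j, qc1_toQuat_j, qc2_toQuat_j, qc2_toQuat_j]
      refine ⟨?_, ?_, ?_, ?_, ?_, ?_⟩
      · simp only [map_zero, zero_mul, zero_add]; linear_combination hz1
      · simp only [map_zero, zero_mul, zero_add, add_zero, mul_zero]
        have := conj_swap hz2
        linear_combination this
      · simp
      · rw [e1]; ring
      · simp
      · rw [e1, e2]; ring
end
end

section
/- Let a, b ∈ ℂ and suppose there exist unit dual quaternions q̂, p̂ with (1 + aε) q̂ = p̂ (1 + bε). Then Re(a) = Re(b). -/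
noncomputable section
open Matrix

theorem stmt12 (a b : ℂ) (q p : DQ) (hq : dconj q * q = 1) (hp : dconj p * p = 1)
    (h : (1 + TrivSqZeroExt.inr (toQuat a)) * q = p * (1 + TrivSqZeroExt.inr (toQuat b))) :
    a.re = b.re := by
  have hq1 : star q.fst * q.fst = 1 := by
    have := congrArg TrivSqZeroExt.fst hq; rw [TrivSqZeroExt.fst_mul] at this; simpa [dconj] using this
  have hq2 : star q.fst * q.snd + star q.snd * q.fst = 0 := by
    have := congrArg TrivSqZeroExt.snd hq; rw [TrivSqZeroExt.snd_mul] at this; simpa [dconj] using this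
  have hfst : q.fst = p.fst := by
    have := congrArg TrivSqZeroExt.fst h; simpa using this
  have hsnd : q.snd + toQuat a * q.fst = p.fst * toQuat b + p.snd := by
    have := congrArg TrivSqZeroExt.snd h; simpa using this
  have hp2 : star q.fst * p.snd + star p.snd * q.fst = 0 := by
    have := congrArg TrivSqZeroExt.snd hp; rw [TrivSqZeroExt.snd_mul] at this
    simpa [dconj, ← hfst] using this
  have hpsnd : p.snd = q.snd + toQuat a * q.fst - q.fst * toQuat b := by
    rw [← hfst] at hsnd; linear_combination (norm := noncomm_ring) -hsnd
  have hA : toQuat a + star (toQuat a) = ((2 * a.re : ℝ) : Quat) := by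
    ext <;> simp <;> simp [toQuat] <;> ring
  have hB : toQuat b + star (toQuat b) = ((2 * b.re : ℝ) : Quat) := by
    ext <;> simp <;> simp [toQuat] <;> ring
  have hcoe : ∀ (r : ℝ), star q.fst * ((r : Quat) * q.fst) = (r : Quat) := by
    intro r
    rw [Quaternion.coe_commutes, ← mul_assoc, hq1, one_mul]
  have expand : star q.fst * p.snd + star p.snd * q.fst
      = (star q.fst * q.snd + star q.snd * q.fst)
        + star q.fst * ((toQuat a + star (toQuat a)) * q.fst)
        - (star q.fst * q.fst) * toQuat b - star (toQuat b) * (star q.fst * q.fst) := by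
    rw [hpsnd]; simp only [star_sub, star_add, StarMul.star_mul]; noncomm_ring
  rw [hp2, hq2, hq1, hA, hcoe, one_mul, mul_one, zero_add, sub_sub, hB] at expand
  have key : ((2 * a.re : ℝ) : Quat) = ((2 * b.re : ℝ) : Quat) :=
    sub_eq_zero.mp expand.symm
  have := congrArg QuaternionAlgebra.re key
  simp at this
  linarith
end
end

section
/- With F and G defined on dual quaternion vectors by F(v) = [v1; −v̄2] + [v3; −v̄4]ε and G(v) = [v2; v̄1] + [v4; v̄3]ε (where v = v1 + v2 j + (v3 + v4 j)ε), if J(Q)F(v) = F(u) then also J(Q)G(v) = G(u). -/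
noncomputable section
open Matrix

/-- The map F sending v₁ + v₂ j + (v₃ + v₄ j)ε to [v₁; -v̄2] + [v₃; -v̄4]ε. -/
def Fvec {n : ℕ} (v : Fin n → DQ) : Fin n ⊕ Fin n → DC
  | .inl i => ⟨qc1 (v i).fst, qc1 (v i).snd⟩
  | .inr i => ⟨-(starRingEnd ℂ) (qc2 (v i).fst), -(starRingEnd ℂ) (qc2 (v i).snd)⟩

/-- The map G sending v₁ + v₂ j + (v₃ + v₄ j)ε to [v₂; v̄1] + [v₄; v̄3]ε. -/
def Gvec {n : ℕ} (v : Fin n → DQ) : Fin n ⊕ Fin n → DC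
  | .inl i => ⟨qc2 (v i).fst, qc2 (v i).snd⟩
  | .inr i => ⟨(starRingEnd ℂ) (qc1 (v i).fst), (starRingEnd ℂ) (qc1 (v i).snd)⟩


lemma dcconj_mul (a b : DC) : dcconj (a*b) = dcconj a * dcconj b := by
  ext <;> simp [dcconj, TrivSqZeroExt.fst_mul, TrivSqZeroExt.snd_mul, smul_eq_mul] <;> rfl

lemma dcconj_add (a b : DC) : dcconj (a+b) = dcconj a + dcconj b := by
  ext <;> simp [dcconj] <;> rfl

lemma dcconj_neg (a : DC) : dcconj (-a) = - dcconj a := by ext <;> simp [dcconj] <;> rfl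
lemma dcconj_dcconj (a : DC) : dcconj (dcconj a) = a := by ext <;> simp [dcconj]

lemma dcconj_sum {α : Type*} (s : Finset α) (f : α → DC) :
    dcconj (∑ j ∈ s, f j) = ∑ j ∈ s, dcconj (f j) := by
  induction s using Finset.cons_induction with
  | empty => ext <;> simp [dcconj] <;> rfl
  | cons a s ha ih => rw [Finset.sum_cons, Finset.sum_cons, dcconj_add, ih]

/-- conjugate-swap map on vectors. -/
def Svec {n : ℕ} (x : Fin n ⊕ Fin n → DC) : Fin n ⊕ Fin n → DC
  | .inl i => -dcconj (x (.inr i))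
  | .inr i => dcconj (x (.inl i))

lemma J_inl_inl {m n : ℕ} (Q : Matrix (Fin m) (Fin n) DQ) (i : Fin m) (j : Fin n) :
    Jmap Q (.inl i) (.inl j) = ⟨qc1 (Q i j).fst, qc1 (Q i j).snd⟩ := by
  simp [Jmap, adjC, Matrix.fromBlocks]; rfl

lemma J_inl_inr {m n : ℕ} (Q : Matrix (Fin m) (Fin n) DQ) (i : Fin m) (j : Fin n) :
    Jmap Q (.inl i) (.inr j) = ⟨qc2 (Q i j).fst, qc2 (Q i j).snd⟩ := by
  simp [Jmap, adjC, Matrix.fromBlocks]; rfl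

lemma J_inr_inl {m n : ℕ} (Q : Matrix (Fin m) (Fin n) DQ) (i : Fin m) (j : Fin n) :
    Jmap Q (.inr i) (.inl j)
      = ⟨-(starRingEnd ℂ) (qc2 (Q i j).fst), -(starRingEnd ℂ) (qc2 (Q i j).snd)⟩ := by
  simp [Jmap, adjC, Matrix.fromBlocks]; rfl

lemma J_inr_inr {m n : ℕ} (Q : Matrix (Fin m) (Fin n) DQ) (i : Fin m) (j : Fin n) :
    Jmap Q (.inr i) (.inr j)
      = ⟨(starRingEnd ℂ) (qc1 (Q i j).fst), (starRingEnd ℂ) (qc1 (Q i j).snd)⟩ := by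
  simp [Jmap, adjC, Matrix.fromBlocks]; rfl

lemma key {m n : ℕ} (Q : Matrix (Fin m) (Fin n) DQ) (x : Fin n ⊕ Fin n → DC) :
    (Jmap Q).mulVec (Svec x) = Svec ((Jmap Q).mulVec x) := by
  funext k
  cases k with
  | inl i =>
    show ∑ j, Jmap Q (.inl i) j * Svec x j = -dcconj (∑ j, Jmap Q (.inr i) j * x j)
    rw [dcconj_sum, ← Finset.sum_neg_distrib]
    refine Fintype.sum_equiv (Equiv.sumComm (Fin n) (Fin n)) _ _ fun j => ?_
    cases j with
    | inl j =>
      show Jmap Q (.inl i) (.inl j) * Svec x (.inl j)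
          = -(dcconj (Jmap Q (.inr i) (.inr j) * x (.inr j)))
      rw [dcconj_mul, J_inr_inr, J_inl_inl]
      show _ * -dcconj (x (.inr j)) = _
      have : dcconj (⟨(starRingEnd ℂ) (qc1 (Q i j).fst), (starRingEnd ℂ) (qc1 (Q i j).snd)⟩ : DC)
          = (⟨qc1 (Q i j).fst, qc1 (Q i j).snd⟩ : DC) := by
        ext <;> simp [dcconj]
      rw [this]; exact mul_neg _ _
    | inr j =>
      show Jmap Q (.inl i) (.inr j) * Svec x (.inr j)
          = -(dcconj (Jmap Q (.inr i) (.inl j) * x (.inl j)))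
      rw [dcconj_mul, J_inr_inl, J_inl_inr]
      show _ * dcconj (x (.inl j)) = _
      have : dcconj (⟨-(starRingEnd ℂ) (qc2 (Q i j).fst), -(starRingEnd ℂ) (qc2 (Q i j).snd)⟩ : DC)
          = -(⟨qc2 (Q i j).fst, qc2 (Q i j).snd⟩ : DC) := by
        ext <;> simp [dcconj]
      rw [this]; exact (neg_neg _).symm.trans (congrArg Neg.neg (neg_mul _ _).symm)
  | inr i =>
    show ∑ j, Jmap Q (.inr i) j * Svec x j = dcconj (∑ j, Jmap Q (.inl i) j * x j)
    rw [dcconj_sum]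
    refine Fintype.sum_equiv (Equiv.sumComm (Fin n) (Fin n)) _ _ fun j => ?_
    cases j with
    | inl j =>
      show Jmap Q (.inr i) (.inl j) * Svec x (.inl j)
          = dcconj (Jmap Q (.inl i) (.inr j) * x (.inr j))
      rw [dcconj_mul, J_inr_inl, J_inl_inr]
      show _ * -dcconj (x (.inr j)) = _
      have : dcconj (⟨qc2 (Q i j).fst, qc2 (Q i j).snd⟩ : DC)
          = -(⟨-(starRingEnd ℂ) (qc2 (Q i j).fst), -(starRingEnd ℂ) (qc2 (Q i j).snd)⟩ : DC) := by
        ext <;> simp [dcconj]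
      rw [this]; exact (mul_neg _ _).trans (neg_mul _ _).symm
    | inr j =>
      show Jmap Q (.inr i) (.inr j) * Svec x (.inr j)
          = dcconj (Jmap Q (.inl i) (.inl j) * x (.inl j))
      rw [dcconj_mul, J_inr_inr, J_inl_inl]
      show _ * dcconj (x (.inl j)) = _
      congr 1

lemma Gvec_eq_Svec_Fvec {n : ℕ} (v : Fin n → DQ) : Gvec v = Svec (Fvec v) := by
  funext k
  cases k with
  | inl i => ext <;> simp [Gvec, Svec, Fvec, dcconj] <;> exact (neg_neg _).symm
  | inr i => ext <;> simp [Gvec, Svec, Fvec, dcconj]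

theorem stmt14 {m n : ℕ} (Q : Matrix (Fin m) (Fin n) DQ) (v : Fin n → DQ) (u : Fin m → DQ)
    (h : (Jmap Q).mulVec (Fvec v) = Fvec u) :
    (Jmap Q).mulVec (Gvec v) = Gvec u := by
  rw [Gvec_eq_Svec_Fvec, Gvec_eq_Svec_Fvec, key, h]
end
end
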